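/- Let D be a positive integer. Define a_i = 3i(i+1)/(D(D+2)), b_i = 3(D−i)(i+1)(D+i+2)/(D(D+2)(2i+1)), c_i = 3(D−i+1)i(D+i+1)/(D(D+2)(2i+1)), θ_i = 3 − 2a_i. Let A be the tridiagonal matrix with diagonal entries a_0,…,a_D, superdiagonal b_0,…,b_{D−1}, subdiagonal c_1,…,c_D, and let A* = diag(θ_0,…,θ_D). Let P be defined by P_{i,j} = (2j+1)·₄F₃[−i, i+1, −j, j+1; 1, D+2, −D; 1]. Then P A = A* P. -/

import Mathlib

/-- Pochhammer symbol `(a)_n = a(a+1)⋯(a+n-1)`. -/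
noncomputable def poch (a : ℝ) (n : ℕ) : ℝ := ∏ k ∈ Finset.range n, (a + k)

/-- The terminating hypergeometric sum
`₄F₃[−i, i+1, −j, j+1; 1, D+2, −D; 1] = Σ_{n=0}^{min(i,j)} …`. -/
noncomputable def F4 (D i j : ℕ) : ℝ :=
  ∑ n ∈ Finset.range (min i j + 1),
    (poch (-(i : ℝ)) n * poch ((i : ℝ) + 1) n * poch (-(j : ℝ)) n * poch ((j : ℝ) + 1) n) /
      (poch 1 n * poch ((D : ℝ) + 2) n * poch (-(D : ℝ)) n * (n.factorial : ℝ))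

/-- The matrix `P` with entries `P_{i,j} = (2j+1)·₄F₃[−i,i+1,−j,j+1;1,D+2,−D;1]`. -/
noncomputable def Pmat (D : ℕ) : Matrix (Fin (D + 1)) (Fin (D + 1)) ℝ :=
  fun i j => (2 * ((j : ℕ) : ℝ) + 1) * F4 D (i : ℕ) (j : ℕ)

/-- `a_i = 3i(i+1)/(D(D+2))`. -/
noncomputable def aa (D i : ℕ) : ℝ := 3 * (i : ℝ) * ((i : ℝ) + 1) / ((D : ℝ) * ((D : ℝ) + 2))

/-- `b_i = 3(D−i)(i+1)(D+i+2)/(D(D+2)(2i+1))`. -/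
noncomputable def bb (D i : ℕ) : ℝ :=
  3 * ((D : ℝ) - i) * ((i : ℝ) + 1) * ((D : ℝ) + i + 2) /
    ((D : ℝ) * ((D : ℝ) + 2) * (2 * (i : ℝ) + 1))

/-- `c_i = 3(D−i+1)i(D+i+1)/(D(D+2)(2i+1))`. -/
noncomputable def cc (D i : ℕ) : ℝ :=
  3 * ((D : ℝ) - i + 1) * (i : ℝ) * ((D : ℝ) + i + 1) /
    ((D : ℝ) * ((D : ℝ) + 2) * (2 * (i : ℝ) + 1))

/-- `θ_i = 3 − 2a_i = 3 − 6i(i+1)/(D(D+2))`. -/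
noncomputable def theta (D i : ℕ) : ℝ := 3 - 2 * aa D i

/-- The irreducible tridiagonal matrix `A`. -/
noncomputable def Amat (D : ℕ) : Matrix (Fin (D + 1)) (Fin (D + 1)) ℝ :=
  fun i j =>
    if (i : ℕ) = (j : ℕ) then aa D (i : ℕ)
    else if (j : ℕ) = (i : ℕ) + 1 then bb D (i : ℕ)
    else if (i : ℕ) = (j : ℕ) + 1 then cc D (i : ℕ)
    else 0

/-- The diagonal matrix `A* = diag(θ_0,…,θ_D)`. -/
noncomputable def Astar (D : ℕ) : Matrix (Fin (D + 1)) (Fin (D + 1)) ℝ :=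
  Matrix.diagonal fun i => theta D (i : ℕ)

lemma poch_congr {a b : ℝ} (n : ℕ) (h : a = b) : poch a n = poch b n := by rw [h]

lemma poch_zero (a : ℝ) : poch a 0 = 1 := by simp [poch]

lemma poch_succ (a : ℝ) (n : ℕ) : poch a (n+1) = poch a n * (a + n) := by
  simp [poch, Finset.prod_range_succ]

lemma poch_succ' (a : ℝ) (n : ℕ) : poch a (n+1) = a * poch (a+1) n := by
  rw [poch, Finset.prod_range_succ', mul_comm]
  have h1 : ∏ k ∈ Finset.range n, (a + ↑(k+1)) = poch (a+1) n := by
    rw [poch]; apply Finset.prod_congr rfl; intro k _; push_cast; ring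
  rw [h1]; norm_num

lemma poch_eq_zero {a : ℝ} {n : ℕ} (k : ℕ) (hk : k < n) (h : a + k = 0) : poch a n = 0 :=
  Finset.prod_eq_zero (Finset.mem_range.mpr hk) h

noncomputable def pp (n : ℕ) (x : ℝ) : ℝ := poch (-x) n * poch (x+1) n

lemma pp_zero (x : ℝ) : pp 0 x = 1 := by simp [pp, poch_zero]

lemma pp_cast_eq_zero {j n : ℕ} (h : j < n) : pp n (j : ℝ) = 0 := by
  have : poch (-(j:ℝ)) n = 0 := poch_eq_zero j h (by push_cast; ring)
  simp [pp, this]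

lemma pp_neg_one_eq_zero {n : ℕ} (h : 1 ≤ n) : pp n (-1) = 0 := by
  have h0 : poch ((-1:ℝ)+1) n = 0 := poch_eq_zero 0 h (by norm_num)
  rw [pp, h0, mul_zero]

lemma pp_succ (n : ℕ) (x : ℝ) : pp (n+1) x = pp n x * ((n - x) * (x + n + 1)) := by
  simp only [pp, poch_succ]; ring

lemma ppI1 (n : ℕ) (x : ℝ) : pp n (x-1) * (x + n) = (x - n) * pp n x := by
  have h1 : poch x n * (x + n) = x * poch (x+1) n := by
    rw [← poch_succ, poch_succ']
  have h2 : poch (-x) n * (-x + n) = -x * poch (-x+1) n := by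
    rw [← poch_succ, poch_succ']
  have h3 : poch (-(x-1)) n = poch (-x+1) n := poch_congr n (by ring)
  have h4 : poch (x-1+1) n = poch x n := poch_congr n (by ring)
  rw [pp, pp, h3, h4]
  linear_combination poch (-x+1) n * h1 + poch (x+1) n * h2

lemma ppI2 (n : ℕ) (x : ℝ) : pp n (x+1) * (x + 1 - n) = (x + n + 1) * pp n x := by
  have h1 : poch (-(x+1)) n * (-(x+1) + n) = -(x+1) * poch (-(x+1)+1) n := by
    rw [← poch_succ, poch_succ']
  have h2 : poch (x+1) n * (x+1 + n) = (x+1) * poch (x+1+1) n := by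
    rw [← poch_succ, poch_succ']
  have h3 : poch (-(x+1)+1) n = poch (-x) n := poch_congr n (by ring)
  rw [h3] at h1
  rw [pp, pp]
  linear_combination (-(poch (x+1+1) n)) * h1 - poch (-x) n * h2

lemma ppI4 (j : ℕ) : pp (j+1) ((j:ℝ)+1) = -(2*j+1)*(2*j+2) * pp j (j:ℝ) := by
  have h1 := pp_succ j ((j:ℝ)+1)
  have h2 := ppI2 j (j:ℝ)
  have h3 : ((j:ℝ) + 1 - j) = 1 := by ring
  rw [h3, mul_one] at h2
  rw [h1, h2]; ring

lemma key1 (D n j : ℕ) :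
    3*((D:ℝ)+1-j)*j*((D:ℝ)+j+1) * pp n ((j:ℝ)-1)
      + 3*(j:ℝ)*((j:ℝ)+1)*(2*(j:ℝ)+1) * pp n (j:ℝ)
      + 3*((D:ℝ)-j)*((j:ℝ)+1)*((D:ℝ)+j+2) * pp n ((j:ℝ)+1)
    = (2*(j:ℝ)+1) * ((3*((D:ℝ)*((D:ℝ)+2)) - 6*(n:ℝ)*((n:ℝ)+1)) * pp n (j:ℝ)
        + 6*(n:ℝ)^2*((D:ℝ)+n+1)*((n:ℝ)-1-(D:ℝ)) * pp (n-1) (j:ℝ)) := by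
  rcases Nat.eq_zero_or_pos n with hn0 | hn1
  · subst hn0
    simp only [pp_zero, Nat.zero_sub, Nat.cast_zero]
    ring
  · rcases lt_trichotomy n (j+1) with hlt | heq | hgt
    · -- 1 ≤ n ≤ j : generic case
      have hnj : n ≤ j := Nat.lt_succ_iff.mp hlt
      have hA := ppI1 n (j:ℝ)
      have hB := ppI2 n (j:ℝ)
      obtain ⟨m, rfl⟩ : ∃ m, n = m + 1 := ⟨n - 1, by omega⟩
      have hP : pp (m+1) (j:ℝ) = pp m (j:ℝ) * (((m+1:ℕ):ℝ) - 1 - j) * ((j:ℝ) + (m+1:ℕ)) := by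
        rw [pp_succ]; push_cast; ring
      set nr : ℝ := ((m+1 : ℕ) : ℝ) with hnr
      have hM : ((j:ℝ) + nr) * ((j:ℝ) + 1 - nr) * (nr - 1 - (j:ℝ)) ≠ 0 := by
        have h1 : (0:ℝ) < (j:ℝ) + nr := by
          rw [hnr]; push_cast; positivity
        have h2 : (0:ℝ) < (j:ℝ) + 1 - nr := by
          rw [hnr]; push_cast
          have : (m:ℝ) + 1 ≤ (j:ℝ) := by exact_mod_cast Nat.cast_le.mpr hnj
          linarith
        have h3 : nr - 1 - (j:ℝ) < 0 := by
          rw [hnr]; push_cast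
          have : (m:ℝ) + 1 ≤ (j:ℝ) := by
            have : m + 1 ≤ j := by omega
            exact_mod_cast this
          linarith
        exact mul_ne_zero (mul_ne_zero (ne_of_gt h1) (ne_of_gt h2)) (ne_of_lt h3)
      apply mul_left_cancel₀ hM
      simp only [Nat.add_sub_cancel]
      linear_combination
        (3*((D:ℝ)+1-j)*j*((D:ℝ)+j+1) * ((j:ℝ)+1-nr) * (nr-1-(j:ℝ))) * hA
        + (3*((D:ℝ)-j)*((j:ℝ)+1)*((D:ℝ)+j+2) * ((j:ℝ)+nr) * (nr-1-(j:ℝ))) * hB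
        + ((2*(j:ℝ)+1) * (6*nr^2*((D:ℝ)+nr+1)*(nr-1-(D:ℝ))) * ((j:ℝ)+1-nr)) * hP
    · -- n = j + 1
      subst heq
      have hz1 : pp (j+1) ((j:ℝ)-1) = 0 := by
        rcases Nat.eq_zero_or_pos j with h0 | h1
        · subst h0; norm_num [pp_neg_one_eq_zero]
        · have : ((j:ℝ) - 1) = ((j - 1 : ℕ) : ℝ) := by
            have : (1:ℝ) ≤ (j:ℝ) := by exact_mod_cast h1
            push_cast [Nat.cast_sub h1]; ring
          rw [this, pp_cast_eq_zero (by omega)]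
      have hz2 : pp (j+1) (j:ℝ) = 0 := pp_cast_eq_zero (by omega)
      have h4 : pp (j+1) ((j:ℝ)+1) = -(2*j+1)*(2*j+2) * pp j (j:ℝ) := ppI4 j
      rw [hz1, hz2, h4]
      simp only [Nat.add_sub_cancel]
      push_cast; ring
    · -- n ≥ j + 2 : everything vanishes
      have hz1 : pp n ((j:ℝ)-1) = 0 := by
        rcases Nat.eq_zero_or_pos j with h0 | h1
        · subst h0; norm_num [pp_neg_one_eq_zero (by omega : 1 ≤ n)]
        · have : ((j:ℝ) - 1) = ((j - 1 : ℕ) : ℝ) := by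
            push_cast [Nat.cast_sub h1]; ring
          rw [this, pp_cast_eq_zero (by omega)]
      have hz2 : pp n (j:ℝ) = 0 := pp_cast_eq_zero (by omega)
      have hz3 : pp n ((j:ℝ)+1) = 0 := by
        have : ((j:ℝ) + 1) = ((j + 1 : ℕ) : ℝ) := by push_cast; ring
        rw [this, pp_cast_eq_zero (by omega)]
      have hz4 : pp (n-1) (j:ℝ) = 0 := pp_cast_eq_zero (by omega)
      rw [hz1, hz2, hz3, hz4]; ring

noncomputable def cf (D n : ℕ) : ℝ :=
  (poch 1 n * poch ((D : ℝ) + 2) n * poch (-(D : ℝ)) n * (n.factorial : ℝ))⁻¹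

lemma F4_eq {D i k : ℕ} (hi : i ≤ D) (hk : k ≤ D) :
    F4 D i k = ∑ n ∈ Finset.range (D+1), cf D n * pp n (i:ℝ) * pp n (k:ℝ) := by
  rw [F4]
  have h1 : ∀ n : ℕ,
      (poch (-(i : ℝ)) n * poch ((i : ℝ) + 1) n * poch (-(k : ℝ)) n * poch ((k : ℝ) + 1) n) /
        (poch 1 n * poch ((D : ℝ) + 2) n * poch (-(D : ℝ)) n * (n.factorial : ℝ))
      = cf D n * pp n (i:ℝ) * pp n (k:ℝ) := by
    intro n; rw [cf, pp, pp, div_eq_mul_inv]; ring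
  calc ∑ n ∈ Finset.range (min i k + 1), _ = ∑ n ∈ Finset.range (min i k + 1),
        cf D n * pp n (i:ℝ) * pp n (k:ℝ) := Finset.sum_congr rfl (fun n _ => h1 n)
  _ = ∑ n ∈ Finset.range (D+1), cf D n * pp n (i:ℝ) * pp n (k:ℝ) := by
      apply Finset.sum_subset (by intro x hx; simp only [Finset.mem_range] at hx ⊢; omega)
      intro n _ hn2
      simp only [Finset.mem_range, not_lt] at hn2
      rcases le_total i k with h | h
      · rw [pp_cast_eq_zero (show i < n by omega)]; ring
      · rw [pp_cast_eq_zero (show k < n by omega)]; ring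

lemma cf_rec {D n : ℕ} (hn : n < D) :
    cf D n = cf D (n+1) * (((n:ℝ)+1)^2 * ((D:ℝ)+(n:ℝ)+2) * ((n:ℝ)-(D:ℝ))) := by
  have hu : poch 1 (n+1) * poch ((D:ℝ)+2) (n+1) * poch (-(D:ℝ)) (n+1) * (((n+1).factorial:ℝ))
      = (poch 1 n * poch ((D:ℝ)+2) n * poch (-(D:ℝ)) n * (n.factorial : ℝ))
        * (((n:ℝ)+1)^2 * ((D:ℝ)+(n:ℝ)+2) * ((n:ℝ)-(D:ℝ))) := by
    simp only [poch_succ, Nat.factorial_succ]; push_cast; ring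
  have hK : (((n:ℝ)+1)^2 * ((D:ℝ)+(n:ℝ)+2) * ((n:ℝ)-(D:ℝ))) ≠ 0 := by
    have h1 : (0:ℝ) < ((n:ℝ)+1)^2 := by positivity
    have h2 : (0:ℝ) < (D:ℝ)+(n:ℝ)+2 := by positivity
    have h3 : (n:ℝ)-(D:ℝ) < 0 := by
      have : (n:ℝ) < (D:ℝ) := by exact_mod_cast hn
      linarith
    intro h
    rcases mul_eq_zero.mp h with h' | h'
    · rcases mul_eq_zero.mp h' with h'' | h'' <;> nlinarith
    · linarith
  rw [cf, cf, hu, mul_inv (poch 1 n * poch ((D:ℝ)+2) n * poch (-(D:ℝ)) n * (n.factorial : ℝ)),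
    inv_mul_cancel_right₀ hK]

lemma theta_pp {D i n : ℕ} (hd : (D:ℝ) * ((D:ℝ)+2) ≠ 0) :
    theta D i * pp n (i:ℝ)
      = (3 - 6*(n:ℝ)*((n:ℝ)+1) / ((D:ℝ)*((D:ℝ)+2))) * pp n (i:ℝ)
        + 6 / ((D:ℝ)*((D:ℝ)+2)) * pp (n+1) (i:ℝ) := by
  rw [theta, aa, pp_succ]
  field_simp
  ring

lemma shift_sum (D i j : ℕ) (hi : i ≤ D) :
    ∑ n ∈ Finset.range (D+1), cf D n * pp n (i:ℝ) *
        ((2*(j:ℝ)+1) * (6*(n:ℝ)^2*((D:ℝ)+(n:ℝ)+1)*((n:ℝ)-1-(D:ℝ))) * pp (n-1) (j:ℝ)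
          / ((D:ℝ)*((D:ℝ)+2)))
    = ∑ n ∈ Finset.range (D+1), cf D n * ((2*(j:ℝ)+1) * pp n (j:ℝ) *
        (6 / ((D:ℝ)*((D:ℝ)+2)) * pp (n+1) (i:ℝ))) := by
  rw [Finset.sum_range_succ' _ D, Finset.sum_range_succ]
  have h0 : cf D 0 * pp 0 (i:ℝ) *
      ((2*(j:ℝ)+1) * (6*((0:ℕ):ℝ)^2*((D:ℝ)+((0:ℕ):ℝ)+1)*(((0:ℕ):ℝ)-1-(D:ℝ))) * pp (0-1) (j:ℝ)
        / ((D:ℝ)*((D:ℝ)+2))) = 0 := by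
    norm_num
  have hD : cf D D * ((2*(j:ℝ)+1) * pp D (j:ℝ) * (6 / ((D:ℝ)*((D:ℝ)+2)) * pp (D+1) (i:ℝ))) = 0 := by
    rw [pp_cast_eq_zero (show i < D + 1 by omega)]; ring
  rw [h0, hD, add_zero, add_zero]
  apply Finset.sum_congr rfl
  intro n hn
  rw [Finset.mem_range] at hn
  rw [cf_rec hn]
  simp only [Nat.add_sub_cancel]
  push_cast
  ring

lemma main_scalar (D i j : ℕ) (hD : 0 < D) (hi : i ≤ D) (hj : j ≤ D) :
    (if j = 0 then 0 else (2*((j-1 : ℕ):ℝ)+1) * F4 D i (j-1) * bb D (j-1))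
      + (2*(j:ℝ)+1) * F4 D i j * aa D j
      + (if j < D then (2*((j+1 : ℕ):ℝ)+1) * F4 D i (j+1) * cc D (j+1) else 0)
    = theta D i * ((2*(j:ℝ)+1) * F4 D i j) := by
  have hd : (D:ℝ) * ((D:ℝ)+2) ≠ 0 := by
    have : (0:ℝ) < (D:ℝ) := by exact_mod_cast hD
    positivity
  set d : ℝ := (D:ℝ) * ((D:ℝ)+2) with hdd
  -- bridge lemmas
  have hb : (if j = 0 then 0 else (2*((j-1 : ℕ):ℝ)+1) * F4 D i (j-1) * bb D (j-1))
      = ∑ n ∈ Finset.range (D+1), cf D n * pp n (i:ℝ) *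
          (3*((D:ℝ)+1-j)*(j:ℝ)*((D:ℝ)+j+1) * pp n ((j:ℝ)-1) / d) := by
    rcases Nat.eq_zero_or_pos j with h0 | h1
    · subst h0
      simp only [if_pos rfl, Nat.cast_zero]
      symm
      apply Finset.sum_eq_zero
      intro n _
      norm_num
    · rw [if_neg (by omega)]
      have hcast : ((j-1 : ℕ):ℝ) = (j:ℝ) - 1 := by
        push_cast [Nat.cast_sub h1]; ring
      rw [F4_eq (hi) (show j - 1 ≤ D by omega), Finset.mul_sum, Finset.sum_mul]
      apply Finset.sum_congr rfl
      intro n _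
      rw [bb, hcast]
      have h2 : (2*((j:ℝ)-1)+1) ≠ 0 := by
        have : (1:ℝ) ≤ (j:ℝ) := by exact_mod_cast h1
        intro h; nlinarith
      field_simp
      ring
  have ha : (2*(j:ℝ)+1) * F4 D i j * aa D j
      = ∑ n ∈ Finset.range (D+1), cf D n * pp n (i:ℝ) *
          (3*(j:ℝ)*((j:ℝ)+1)*(2*(j:ℝ)+1) * pp n (j:ℝ) / d) := by
    rw [F4_eq hi hj, Finset.mul_sum, Finset.sum_mul]
    apply Finset.sum_congr rfl
    intro n _
    rw [aa]
    field_simp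
    ring
  have hc : (if j < D then (2*((j+1 : ℕ):ℝ)+1) * F4 D i (j+1) * cc D (j+1) else 0)
      = ∑ n ∈ Finset.range (D+1), cf D n * pp n (i:ℝ) *
          (3*((D:ℝ)-j)*((j:ℝ)+1)*((D:ℝ)+j+2) * pp n ((j:ℝ)+1) / d) := by
    rcases Nat.lt_or_ge j D with h1 | h2
    · rw [if_pos h1]
      rw [F4_eq hi (show j + 1 ≤ D by omega), Finset.mul_sum, Finset.sum_mul]
      apply Finset.sum_congr rfl
      intro n _
      rw [cc]
      have h2 : (2*((j:ℝ)+1)+1) ≠ 0 := by positivity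
      push_cast
      field_simp
      ring
    · have hjD : j = D := by omega
      rw [if_neg (by omega)]
      symm
      apply Finset.sum_eq_zero
      intro n _
      rw [hjD]
      norm_num
  rw [hb, ha, hc, ← Finset.sum_add_distrib, ← Finset.sum_add_distrib]
  -- apply key1 termwise
  have step1 : ∀ n ∈ Finset.range (D+1),
      cf D n * pp n (i:ℝ) * (3*((D:ℝ)+1-j)*(j:ℝ)*((D:ℝ)+j+1) * pp n ((j:ℝ)-1) / d)
        + cf D n * pp n (i:ℝ) * (3*(j:ℝ)*((j:ℝ)+1)*(2*(j:ℝ)+1) * pp n (j:ℝ) / d)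
        + cf D n * pp n (i:ℝ) * (3*((D:ℝ)-j)*((j:ℝ)+1)*((D:ℝ)+j+2) * pp n ((j:ℝ)+1) / d)
      = cf D n * ((2*(j:ℝ)+1) * pp n (j:ℝ) *
            ((3 - 6*(n:ℝ)*((n:ℝ)+1) / d) * pp n (i:ℝ)))
        + cf D n * pp n (i:ℝ) *
            ((2*(j:ℝ)+1) * (6*(n:ℝ)^2*((D:ℝ)+(n:ℝ)+1)*((n:ℝ)-1-(D:ℝ))) * pp (n-1) (j:ℝ) / d) := by
    intro n _
    have hk := key1 D n j
    field_simp
    linear_combination (cf D n * pp n (i:ℝ)) * hk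
  rw [Finset.sum_congr rfl step1, Finset.sum_add_distrib, shift_sum D i j hi,
    ← Finset.sum_add_distrib]
  rw [F4_eq hi hj, Finset.mul_sum, Finset.mul_sum]
  apply Finset.sum_congr rfl
  intro n _
  have ht := theta_pp (i := i) (n := n) hd
  rw [← hdd] at ht
  linear_combination (-(cf D n * (2*(j:ℝ)+1) * pp n (j:ℝ))) * ht

theorem PA_eq_AstarP (D : ℕ) (hD : 0 < D) : Pmat D * Amat D = Astar D * Pmat D := by
  ext i j
  have hi : (i : ℕ) ≤ D := by omega
  have hj : (j : ℕ) ≤ D := by omega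
  have hAstar : (Astar D * Pmat D) i j = theta D (i:ℕ) * ((2*((j:ℕ):ℝ)+1) * F4 D (i:ℕ) (j:ℕ)) := by
    rw [Astar, Matrix.diagonal_mul, Pmat]
  rw [Matrix.mul_apply, hAstar]
  set jv : ℕ := (j : ℕ) with hjv
  have hstep : ∀ k : Fin (D+1), Pmat D i k * Amat D k j
      = (if (k:ℕ) = jv then (2*((k:ℕ):ℝ)+1) * F4 D (i:ℕ) (k:ℕ) * aa D (k:ℕ) else 0)
        + (if jv = (k:ℕ)+1 then (2*((k:ℕ):ℝ)+1) * F4 D (i:ℕ) (k:ℕ) * bb D (k:ℕ) else 0)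
        + (if (k:ℕ) = jv+1 then (2*((k:ℕ):ℝ)+1) * F4 D (i:ℕ) (k:ℕ) * cc D (k:ℕ) else 0) := by
    intro k
    rw [Pmat, Amat]
    rcases eq_or_ne (k:ℕ) jv with h1 | h1
    · rw [if_pos h1, if_pos h1, if_neg (by omega), if_neg (by omega)]; ring
    · rw [if_neg h1, if_neg (fun h => h1 h)]
      rcases eq_or_ne jv ((k:ℕ)+1) with h2 | h2
      · rw [if_pos h2, if_pos h2, if_neg (by omega)]; ring
      · rw [if_neg h2, if_neg h2]
        rcases eq_or_ne (k:ℕ) (jv+1) with h3 | h3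
        · rw [if_pos h3, if_pos h3]; ring
        · rw [if_neg h3, if_neg h3]; ring
  rw [Finset.sum_congr rfl (fun k _ => hstep k), Finset.sum_add_distrib,
    Finset.sum_add_distrib]
  have e1 : ∑ k : Fin (D+1),
      (if (k:ℕ) = jv then (2*((k:ℕ):ℝ)+1) * F4 D (i:ℕ) (k:ℕ) * aa D (k:ℕ) else 0)
      = (2*(jv:ℝ)+1) * F4 D (i:ℕ) jv * aa D jv := by
    rw [Fin.sum_univ_eq_sum_range
      (fun k => if k = jv then (2*(k:ℝ)+1) * F4 D (i:ℕ) k * aa D k else 0) (D+1)]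
    rw [Finset.sum_ite_eq' (Finset.range (D+1)) jv
      (fun k => (2*(k:ℝ)+1) * F4 D (i:ℕ) k * aa D k)]
    rw [if_pos (Finset.mem_range.mpr (by omega))]
  have e2 : ∑ k : Fin (D+1),
      (if jv = (k:ℕ)+1 then (2*((k:ℕ):ℝ)+1) * F4 D (i:ℕ) (k:ℕ) * bb D (k:ℕ) else 0)
      = (if jv = 0 then 0 else (2*((jv-1 : ℕ):ℝ)+1) * F4 D (i:ℕ) (jv-1) * bb D (jv-1)) := by
    rw [Fin.sum_univ_eq_sum_range
      (fun k => if jv = k+1 then (2*(k:ℝ)+1) * F4 D (i:ℕ) k * bb D k else 0) (D+1)]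
    rcases Nat.eq_zero_or_pos jv with h0 | h1
    · rw [if_pos h0]
      apply Finset.sum_eq_zero
      intro k _
      rw [if_neg (by omega)]
    · rw [if_neg (by omega)]
      obtain ⟨m, hm⟩ : ∃ m, jv = m + 1 := ⟨jv - 1, by omega⟩
      rw [hm]
      have hcong : ∀ k ∈ Finset.range (D+1),
          (if m + 1 = k+1 then (2*(k:ℝ)+1) * F4 D (i:ℕ) k * bb D k else 0)
          = (if k = m then (2*(k:ℝ)+1) * F4 D (i:ℕ) k * bb D k else 0) := by
        intro k _
        by_cases h : k = m
        · rw [if_pos (by omega), if_pos h]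
        · rw [if_neg (by omega), if_neg h]
      rw [Finset.sum_congr rfl hcong,
        Finset.sum_ite_eq' (Finset.range (D+1)) m
          (fun k => (2*(k:ℝ)+1) * F4 D (i:ℕ) k * bb D k),
        if_pos (Finset.mem_range.mpr (by omega))]
      simp only [Nat.add_sub_cancel]
  have e3 : ∑ k : Fin (D+1),
      (if (k:ℕ) = jv+1 then (2*((k:ℕ):ℝ)+1) * F4 D (i:ℕ) (k:ℕ) * cc D (k:ℕ) else 0)
      = (if jv < D then (2*((jv+1 : ℕ):ℝ)+1) * F4 D (i:ℕ) (jv+1) * cc D (jv+1) else 0) := by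
    rw [Fin.sum_univ_eq_sum_range
      (fun k => if k = jv+1 then (2*(k:ℝ)+1) * F4 D (i:ℕ) k * cc D k else 0) (D+1)]
    rw [Finset.sum_ite_eq' (Finset.range (D+1)) (jv+1)
      (fun k => (2*(k:ℝ)+1) * F4 D (i:ℕ) k * cc D k)]
    rcases Nat.lt_or_ge jv D with h1 | h2
    · rw [if_pos (Finset.mem_range.mpr (by omega)), if_pos h1]
    · rw [if_neg (by simp only [Finset.mem_range]; omega), if_neg (by omega)]
  rw [e1, e2, e3]
  have := main_scalar D (i:ℕ) jv hD hi hj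
  linarith [this]
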